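/- Let T ⊆ X_0 be a generalised nice set containing ⟨P_{1,2,1}⟩ = {{0,0},{0,1},{0,2},{0,5},{1,1},{1,2},{1,5}}. If {k,k} ∈ T for some k ∈ {3,4,6,7}, then T ∩ X equals either X or X - X_{ℓ^C_{1k}}, where X_{ℓ^C_{1k}} = {{a,b} ∈ X : a,b ∉ {1,k,1*k}}. -/

import Mathlib

/-- The seven lines of the Fano plane. -/
def fanoLines : List (List ℕ) := [[1,2,5],[5,6,7],[7,4,1],[1,3,6],[6,4,2],[2,7,3],[3,4,5]]

/-- The Fano operation `*` extended to `I₀ = {0,…,7}`: `0*i = i*0 = i`, `i*i = 0`,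
and for distinct `i, j ∈ I` it is the third point on the line through `i` and `j`. -/
def fstar (i j : ℕ) : ℕ :=
  if i = j then 0
  else if i = 0 then j
  else if j = 0 then i
  else
    match fanoLines.find? (fun l => l.contains i && l.contains j) with
    | some l => (l.filter (fun x => x != i && x != j)).headD 0
    | none => 0

/-- The points of the Fano plane. -/
def I : Set ℕ := {1,2,3,4,5,6,7}

/-- The extended point set `I₀ = I ∪ {0}`. -/
def I0 : Set ℕ := {0,1,2,3,4,5,6,7}

/-- `X₀`: unordered pairs from `I₀` (repetitions allowed). -/
def X0 : Set (Sym2 ℕ) := {z | ∃ i ∈ I0, ∃ j ∈ I0, z = s(i,j)}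

/-- `X`: unordered pairs of two distinct points of `I`. -/
def X : Set (Sym2 ℕ) := {z | ∃ i ∈ I, ∃ j ∈ I, i ≠ j ∧ z = s(i,j)}

/-- `X_F = {{0,i} : i ∈ I₀}`. -/
def XF : Set (Sym2 ℕ) := {z | ∃ i ∈ I0, z = s(0,i)}

/-- `P_{a,b,c}`. -/
def P (a b c : ℕ) : Set (Sym2 ℕ) :=
  {s(a,b), s(b,c), s(c,a), s(a, fstar b c), s(b, fstar c a), s(c, fstar a b)}

/-- A generalised nice set: a subset of `X₀` such that `{a,b},{a*b,c} ∈ T` implies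
`P_{a,b,c} ⊆ T` for all `a, b, c ∈ I₀`. -/
def IsGNS (T : Set (Sym2 ℕ)) : Prop :=
  T ⊆ X0 ∧ ∀ a ∈ I0, ∀ b ∈ I0, ∀ c ∈ I0,
    s(a,b) ∈ T → s(fstar a b, c) ∈ T → P a b c ⊆ T

/-- A nice set: a subset of `X` such that for all generative `i, j, k ∈ I`,
`{i,j},{i*j,k} ∈ T` implies `P_{i,j,k} ⊆ T`. -/
def IsNice (T : Set (Sym2 ℕ)) : Prop :=
  T ⊆ X ∧ ∀ i ∈ I, ∀ j ∈ I, ∀ k ∈ I, i ≠ j → i ≠ k → j ≠ k → k ≠ fstar i j →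
    s(i,j) ∈ T → s(fstar i j, k) ∈ T → P i j k ⊆ T

/-- The smallest generalised nice set containing `S`. -/
def gnsClosure (S : Set (Sym2 ℕ)) : Set (Sym2 ℕ) := ⋂₀ {T | IsGNS T ∧ S ⊆ T}

/-- A collineation of the Fano plane, realised as a permutation of `ℕ` fixing the
complement of `I` and preserving collinearity. -/
def IsColl (σ : Equiv.Perm ℕ) : Prop :=
  (∀ n, n ∉ I → σ n = n) ∧
  ∀ i ∈ I, ∀ j ∈ I, i ≠ j → σ (fstar i j) = fstar (σ i) (σ j)


/-! ### Auxiliary machinery for TintX33 -/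

/-- Encode an unordered pair of naturals `≤ 7` as a single natural. -/
def enc (a b : ℕ) : ℕ := if a ≤ b then 8*a+b else 8*b+a

def PlN (a b c : ℕ) : List ℕ :=
  [enc a b, enc b c, enc c a, enc a (fstar b c), enc b (fstar c a), enc c (fstar a b)]

def insN (s : List ℕ) (z : ℕ) : List ℕ := if z ∈ s then s else z :: s

def replayN : List (ℕ × ℕ × ℕ) → List ℕ → List ℕ
  | [], s => s
  | (a,b,c) :: ts, s =>
    replayN ts (if a ≤ 7 ∧ b ≤ 7 ∧ c ≤ 7 ∧ enc a b ∈ s ∧ enc (fstar a b) c ∈ s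
                then (PlN a b c).foldl insN s else s)

def InvT (T : Set (Sym2 ℕ)) (s : List ℕ) : Prop :=
  ∀ n ∈ s, ∃ a b : ℕ, a ≤ 7 ∧ b ≤ 7 ∧ n = enc a b ∧ s(a,b) ∈ T

def baseC (k : ℕ) : List ℕ :=
  [enc 0 0, enc 0 1, enc 0 2, enc 0 5, enc 1 1, enc 1 2, enc 1 5, enc k k]

def Il : List ℕ := [1,2,3,4,5,6,7]

lemma fstar_le7 {a b : ℕ} (ha : a ≤ 7) (hb : b ≤ 7) : fstar a b ≤ 7 := by
  interval_cases a <;> interval_cases b <;> decide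

lemma mem_I0_of_le {a : ℕ} (ha : a ≤ 7) : a ∈ I0 := by
  interval_cases a <;> simp [I0]

lemma enc_eq {a b a' b' : ℕ} (ha : a ≤ 7) (hb : b ≤ 7) (ha' : a' ≤ 7) (hb' : b' ≤ 7)
    (h : enc a b = enc a' b') : s(a,b) = s(a',b') := by
  unfold enc at h
  split_ifs at h <;> rw [Sym2.eq_iff] <;> omega

lemma Inv_mem {T : Set (Sym2 ℕ)} {s : List ℕ} (hs : InvT T s) {a b : ℕ}
    (ha : a ≤ 7) (hb : b ≤ 7) (h : enc a b ∈ s) : s(a,b) ∈ T := by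
  obtain ⟨a', b', ha', hb', he, hm⟩ := hs _ h
  rw [enc_eq ha hb ha' hb' he]; exact hm

lemma Inv_foldl {T : Set (Sym2 ℕ)} :
    ∀ (l : List ℕ) (s : List ℕ), InvT T s →
      (∀ n ∈ l, ∃ a b : ℕ, a ≤ 7 ∧ b ≤ 7 ∧ n = enc a b ∧ s(a,b) ∈ T) →
      InvT T (l.foldl insN s) := by
  intro l
  induction l with
  | nil => intro s hs _; exact hs
  | cons x l ih =>
    intro s hs hl
    simp only [List.foldl_cons]
    apply ih
    · intro n hn
      unfold insN at hn
      split_ifs at hn with hx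
      · exact hs n hn
      · rcases List.mem_cons.mp hn with rfl | hn
        · exact hl n List.mem_cons_self
        · exact hs n hn
    · intro n hn; exact hl n (List.mem_cons_of_mem _ hn)

lemma replayN_sound (T : Set (Sym2 ℕ)) (hT : IsGNS T) :
    ∀ (ts : List (ℕ × ℕ × ℕ)) (s : List ℕ), InvT T s → InvT T (replayN ts s) := by
  intro ts
  induction ts with
  | nil => intro s hs; exact hs
  | cons t ts ih =>
    obtain ⟨a, b, c⟩ := t
    intro s hs
    rw [replayN.eq_def]
    apply ih
    split_ifs with h
    · obtain ⟨ha7, hb7, hc7, h1, h2⟩ := h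
      have hab : s(a,b) ∈ T := Inv_mem hs ha7 hb7 h1
      have habc : s(fstar a b, c) ∈ T := Inv_mem hs (fstar_le7 ha7 hb7) hc7 h2
      have hsub := hT.2 a (mem_I0_of_le ha7) b (mem_I0_of_le hb7) c (mem_I0_of_le hc7) hab habc
      apply Inv_foldl _ _ hs
      intro n hn
      have e1 : s(a,b) ∈ P a b c := by simp [P]
      have e2 : s(b,c) ∈ P a b c := by simp [P]
      have e3 : s(c,a) ∈ P a b c := by simp [P]
      have e4 : s(a, fstar b c) ∈ P a b c := by simp [P]
      have e5 : s(b, fstar c a) ∈ P a b c := by simp [P]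
      have e6 : s(c, fstar a b) ∈ P a b c := by simp [P]
      simp only [PlN, List.mem_cons, List.not_mem_nil, or_false] at hn
      rcases hn with rfl | rfl | rfl | rfl | rfl | rfl
      · exact ⟨a, b, ha7, hb7, rfl, hsub e1⟩
      · exact ⟨b, c, hb7, hc7, rfl, hsub e2⟩
      · exact ⟨c, a, hc7, ha7, rfl, hsub e3⟩
      · exact ⟨a, fstar b c, ha7, fstar_le7 hb7 hc7, rfl, hsub e4⟩
      · exact ⟨b, fstar c a, hb7, fstar_le7 hc7 ha7, rfl, hsub e5⟩
      · exact ⟨c, fstar a b, hc7, fstar_le7 ha7 hb7, rfl, hsub e6⟩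
    · exact hs

lemma extract (T : Set (Sym2 ℕ)) (hT : IsGNS T) (cert : List (ℕ × ℕ × ℕ)) (s0 : List ℕ)
    (hinv : InvT T s0) (i j : ℕ) (hi : i ≤ 7) (hj : j ≤ 7)
    (hmem : enc i j ∈ replayN cert s0) : s(i,j) ∈ T :=
  Inv_mem (replayN_sound T hT cert s0 hinv) hi hj hmem

lemma main_aux (T : Set (Sym2 ℕ)) (hT : IsGNS T) (k m : ℕ) (hm : m = fstar 1 k)
    (hinv : InvT T (baseC k))
    (certB certM : List (ℕ × ℕ × ℕ))
    (HB : ∀ i ∈ Il, ∀ j ∈ Il, i ≠ j → (i = 1 ∨ i = k ∨ i = m ∨ j = 1 ∨ j = k ∨ j = m) →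
      enc i j ∈ replayN certB (baseC k))
    (HM : ∀ a ∈ Il, ∀ b ∈ Il, a ≠ b → ¬(a = 1 ∨ a = k ∨ a = m) → ¬(b = 1 ∨ b = k ∨ b = m) →
      ∀ i ∈ Il, ∀ j ∈ Il, i ≠ j → enc i j ∈ replayN certM (enc a b :: baseC k)) :
    T ∩ X = X ∨
    T ∩ X = X \ {z | ∃ a b : ℕ, z = s(a,b) ∧
      a ∉ ({1, k, fstar 1 k} : Set ℕ) ∧ b ∉ ({1, k, fstar 1 k} : Set ℕ)} := by
  subst hm
  have hIl : ∀ x, x ∈ I → x ∈ Il := by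
    intro x hx; simp only [I, Set.mem_insert_iff, Set.mem_singleton_iff] at hx
    simp only [Il, List.mem_cons, List.not_mem_nil, or_false]; tauto
  have hle : ∀ x, x ∈ Il → x ≤ 7 := by
    intro x hx; simp only [Il, List.mem_cons, List.not_mem_nil, or_false] at hx; omega
  have hmemS : ∀ x : ℕ, x ∈ ({1, k, fstar 1 k} : Set ℕ) ↔ (x = 1 ∨ x = k ∨ x = fstar 1 k) := by
    intro x; simp [Set.mem_insert_iff]
  by_cases hex : ∃ a b : ℕ, a ∈ Il ∧ b ∈ Il ∧ a ≠ b ∧ ¬(a = 1 ∨ a = k ∨ a = fstar 1 k) ∧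
      ¬(b = 1 ∨ b = k ∨ b = fstar 1 k) ∧ s(a,b) ∈ T
  · left
    apply Set.eq_of_subset_of_subset Set.inter_subset_right
    intro z hzX
    obtain ⟨i, hi, j, hj, hij, rfl⟩ := hzX
    obtain ⟨a, b, ha, hb, hab, haS, hbS, habT⟩ := hex
    have hinv2 : InvT T (enc a b :: baseC k) := by
      intro n hn
      rcases List.mem_cons.mp hn with rfl | hn
      · exact ⟨a, b, hle a ha, hle b hb, rfl, habT⟩
      · exact hinv n hn
    exact ⟨extract T hT certM _ hinv2 i j (hle i (hIl i hi)) (hle j (hIl j hj))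
        (HM a ha b hb hab haS hbS i (hIl i hi) j (hIl j hj) hij),
      ⟨i, hi, j, hj, hij, rfl⟩⟩
  · right
    apply Set.eq_of_subset_of_subset
    · rintro z ⟨hzT, hzX⟩
      refine ⟨hzX, ?_⟩
      rintro ⟨a, b, heq, haS, hbS⟩
      obtain ⟨i, hi, j, hj, hij, rfl⟩ := hzX
      rw [Sym2.eq_iff] at heq
      rw [hmemS] at haS hbS
      apply hex
      rcases heq with ⟨rfl, rfl⟩ | ⟨rfl, rfl⟩
      · exact ⟨i, j, hIl i hi, hIl j hj, hij, haS, hbS, hzT⟩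
      · exact ⟨i, j, hIl i hi, hIl j hj, hij, hbS, haS, hzT⟩
    · rintro z ⟨hzX, hzL⟩
      obtain ⟨i, hi, j, hj, hij, rfl⟩ := hzX
      refine ⟨?_, ⟨i, hi, j, hj, hij, rfl⟩⟩
      have hd : i = 1 ∨ i = k ∨ i = fstar 1 k ∨ j = 1 ∨ j = k ∨ j = fstar 1 k := by
        by_contra hcon
        push_neg at hcon
        exact hzL ⟨i, j, rfl, by rw [hmemS]; tauto, by rw [hmemS]; tauto⟩
      exact extract T hT certB _ hinv i j (hle i (hIl i hi)) (hle j (hIl j hj))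
        (HB i (hIl i hi) j (hIl j hj) hij hd)

lemma inv_base (T : Set (Sym2 ℕ)) (k : ℕ) (hk7 : k ≤ 7)
    (h00 : s(0,0) ∈ T) (h01 : s(0,1) ∈ T) (h02 : s(0,2) ∈ T) (h05 : s(0,5) ∈ T)
    (h11 : s(1,1) ∈ T) (h12 : s(1,2) ∈ T) (h15 : s(1,5) ∈ T) (hkk : s(k,k) ∈ T) :
    InvT T (baseC k) := by
  intro n hn
  simp only [baseC, List.mem_cons, List.not_mem_nil, or_false] at hn
  rcases hn with rfl | rfl | rfl | rfl | rfl | rfl | rfl | rfl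
  · exact ⟨0, 0, by norm_num, by norm_num, rfl, h00⟩
  · exact ⟨0, 1, by norm_num, by norm_num, rfl, h01⟩
  · exact ⟨0, 2, by norm_num, by norm_num, rfl, h02⟩
  · exact ⟨0, 5, by norm_num, by norm_num, rfl, h05⟩
  · exact ⟨1, 1, by norm_num, by norm_num, rfl, h11⟩
  · exact ⟨1, 2, by norm_num, by norm_num, rfl, h12⟩
  · exact ⟨1, 5, by norm_num, by norm_num, rfl, h15⟩
  · exact ⟨k, k, hk7, hk7, rfl, hkk⟩
def certB3 : List (ℕ×ℕ×ℕ) := [(3,3,1),(3,3,5),(3,4,1),(3,5,1),(3,6,1),(3,6,2),(3,7,1)]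
def certM3 : List (ℕ×ℕ×ℕ) := [(3,3,5),(3,4,2),(1,2,4),(3,3,1),(3,4,1),(3,5,7),(3,6,1),(3,7,1),(4,2,1),(1,2,7),(1,4,2),(2,4,3),(2,4,6),(2,5,3),(2,5,4)]
def certB4 : List (ℕ×ℕ×ℕ) := [(4,4,1),(4,4,2),(4,6,1),(4,7,1),(4,7,2),(4,7,5),(5,1,4)]
def certM4 : List (ℕ×ℕ×ℕ) := [(4,4,5),(5,0,4),(1,1,3),(1,2,3),(2,5,3),(2,6,3),(3,6,5),(4,5,2),(1,2,6),(1,3,2),(1,7,4),(2,3,4),(2,3,7),(2,5,3),(2,6,3),(2,6,4)]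
def certB6 : List (ℕ×ℕ×ℕ) := [(6,6,2),(6,6,5),(6,7,0),(6,7,1),(7,0,1),(7,3,1),(7,3,6),(1,1,4),(1,2,3)]
def certM6 : List (ℕ×ℕ×ℕ) := [(6,6,5),(6,7,2),(1,2,4),(4,7,5),(5,1,4),(5,1,7),(0,5,7),(1,1,7),(1,2,7),(1,3,6),(2,4,3),(2,4,6),(2,5,3),(2,5,4),(2,7,3)]
def certB7 : List (ℕ×ℕ×ℕ) := [(7,7,1),(7,7,5),(0,1,7),(1,1,4),(1,2,7),(1,3,7),(1,4,2),(1,4,3)]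
def certM7 : List (ℕ×ℕ×ℕ) := [(7,7,5),(1,2,7),(1,3,2),(2,5,3),(1,2,3),(1,5,3),(3,6,5),(1,2,6),(1,4,7),(2,3,4),(2,3,7),(2,4,1),(2,5,3),(2,6,4)]

set_option maxRecDepth 100000 in
set_option maxHeartbeats 1000000 in
theorem TintX33 (T : Set (Sym2 ℕ)) (hT : IsGNS T)
    (hP : ({s(0,0), s(0,1), s(0,2), s(0,5), s(1,1), s(1,2), s(1,5)} : Set (Sym2 ℕ)) ⊆ T)
    (k : ℕ) (hk : k = 3 ∨ k = 4 ∨ k = 6 ∨ k = 7) (hkk : s(k,k) ∈ T) :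
    T ∩ X = X ∨
    T ∩ X = X \ {z | ∃ a b : ℕ, z = s(a,b) ∧
      a ∉ ({1, k, fstar 1 k} : Set ℕ) ∧ b ∉ ({1, k, fstar 1 k} : Set ℕ)} := by
  have h00 : s(0,0) ∈ T := hP (by simp)
  have h01 : s(0,1) ∈ T := hP (by simp)
  have h02 : s(0,2) ∈ T := hP (by simp)
  have h05 : s(0,5) ∈ T := hP (by simp)
  have h11 : s(1,1) ∈ T := hP (by simp)
  have h12 : s(1,2) ∈ T := hP (by simp)
  have h15 : s(1,5) ∈ T := hP (by simp)
  rcases hk with rfl | rfl | rfl | rfl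
  · exact main_aux T hT 3 6 (by decide)
      (inv_base T 3 (by norm_num) h00 h01 h02 h05 h11 h12 h15 hkk)
      certB3 certM3 (by decide) (by decide)
  · exact main_aux T hT 4 7 (by decide)
      (inv_base T 4 (by norm_num) h00 h01 h02 h05 h11 h12 h15 hkk)
      certB4 certM4 (by decide) (by decide)
  · exact main_aux T hT 6 3 (by decide)
      (inv_base T 6 (by norm_num) h00 h01 h02 h05 h11 h12 h15 hkk)
      certB6 certM6 (by decide) (by decide)
  · exact main_aux T hT 7 4 (by decide)
      (inv_base T 7 (by norm_num) h00 h01 h02 h05 h11 h12 h15 hkk)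
      certB7 certM7 (by decide) (by decide)
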